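/- Let ε₀ > 0 be sufficiently small, let K_L be sufficiently large, and let h₀(ξ,η) = ξη + Σ_{i=3}^{d} Σ_{j=0}^{i} b_{i,j} ξ^{i−j} η^{j} be a polynomial with 100^d Σ_{i=3}^{d} Σ_{j=0}^{i} |b_{i,j}| ≤ ε₀. Let ζ̄ = (ζ̄₁, ζ̄₂) ∈ [-2,2]² be a point with |ζ̄| > (2K_L)^{-1} and |ζ̄₁| ≥ |ζ̄₂|. Then |∂₂h₀(ζ̄)| ≥ 1/(3K_L) and |∂₂h₀(ζ̄)| ≥ (1/2)|∂₁h₀(ζ̄)|, where ∂₁, ∂₂ denote the partial derivatives in ξ and η. -/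

import Mathlib

noncomputable section

/-- The normalized polynomial `h₀(ξ,η) = ξη + Σ_{i=3}^d Σ_{j=0}^i b_{i,j} ξ^{i-j} η^j`. -/
def hpoly0 (d : ℕ) (b : ℕ → ℕ → ℝ) (ξ η : ℝ) : ℝ :=
  ξ * η + ∑ i ∈ Finset.Icc 3 d, ∑ j ∈ Finset.range (i + 1), b i j * ξ ^ (i - j) * η ^ j

/-- Smallness of the higher order coefficients: `100^d Σ |b_{i,j}| ≤ ε₀`. -/
def CoeffSmall0 (d : ℕ) (ε₀ : ℝ) (b : ℕ → ℕ → ℝ) : Prop :=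
  100 ^ d * ∑ i ∈ Finset.Icc 3 d, ∑ j ∈ Finset.range (i + 1), |b i j| ≤ ε₀

/-- Partial derivative in the first variable. -/
def pd1 (g : ℝ → ℝ → ℝ) : ℝ → ℝ → ℝ := fun x y => deriv (fun s => g s y) x

/-- Partial derivative in the second variable. -/
def pd2 (g : ℝ → ℝ → ℝ) : ℝ → ℝ → ℝ := fun x y => deriv (fun t => g x t) y

lemma pd2_eval (d : ℕ) (b : ℕ → ℕ → ℝ) (x y : ℝ) :
    pd2 (hpoly0 d b) x y =
      x + ∑ i ∈ Finset.Icc 3 d, ∑ j ∈ Finset.range (i + 1),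
        b i j * x ^ (i - j) * (↑j * y ^ (j - 1)) := by
  have h : HasDerivAt (fun t => hpoly0 d b x t)
      (x + ∑ i ∈ Finset.Icc 3 d, ∑ j ∈ Finset.range (i + 1),
        b i j * x ^ (i - j) * (↑j * y ^ (j - 1))) y := by
    unfold hpoly0
    apply HasDerivAt.add
    · simpa using (hasDerivAt_id y).const_mul x
    · apply HasDerivAt.fun_sum
      intro i _
      apply HasDerivAt.fun_sum
      intro j _
      have := (hasDerivAt_pow j y).const_mul (b i j * x ^ (i - j))
      convert this using 1
  exact h.deriv

lemma pd1_eval (d : ℕ) (b : ℕ → ℕ → ℝ) (x y : ℝ) :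
    pd1 (hpoly0 d b) x y =
      y + ∑ i ∈ Finset.Icc 3 d, ∑ j ∈ Finset.range (i + 1),
        b i j * (↑(i - j) * x ^ (i - j - 1)) * y ^ j := by
  have h : HasDerivAt (fun s => hpoly0 d b s y)
      (y + ∑ i ∈ Finset.Icc 3 d, ∑ j ∈ Finset.range (i + 1),
        b i j * (↑(i - j) * x ^ (i - j - 1)) * y ^ j) x := by
    unfold hpoly0
    apply HasDerivAt.add
    · simpa using (hasDerivAt_id x).mul_const y
    · apply HasDerivAt.fun_sum
      intro i _
      apply HasDerivAt.fun_sum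
      intro j _
      have := (((hasDerivAt_pow (i - j) x).const_mul (b i j)).mul_const (y ^ j))
      convert this using 1
  exact h.deriv

lemma pow_le2 (d : ℕ) (x : ℝ) (hx0 : 0 ≤ x) (hx2 : x ≤ 2) (k : ℕ)
    (hk1 : 1 ≤ k) (hkd : k ≤ d) : x ^ k ≤ 2 ^ d * x := by
  obtain ⟨m, rfl⟩ := Nat.exists_eq_add_of_le hk1
  calc x ^ (1 + m) = x ^ m * x := by ring
    _ ≤ 2 ^ m * x := by
        apply mul_le_mul_of_nonneg_right _ hx0
        exact pow_le_pow_left₀ hx0 hx2 m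
    _ ≤ 2 ^ d * x := by
        apply mul_le_mul_of_nonneg_right _ hx0
        exact pow_le_pow_right₀ (by norm_num) (by omega)

lemma core (d : ℕ) (x y : ℝ) (hx : |x| ≤ 2) (hyx : |y| ≤ |x|) (a c : ℕ)
    (h1 : 1 ≤ a + c) (h2 : a + c ≤ d) : |x| ^ a * |y| ^ c ≤ 2 ^ d * |x| := by
  calc |x| ^ a * |y| ^ c ≤ |x| ^ a * |x| ^ c := by
        apply mul_le_mul_of_nonneg_left _ (by positivity)
        exact pow_le_pow_left₀ (abs_nonneg y) hyx c
    _ = |x| ^ (a + c) := by rw [pow_add]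
    _ ≤ 2 ^ d * |x| := pow_le2 d |x| (abs_nonneg x) hx (a + c) h1 h2

lemma err2_bound (d : ℕ) (b : ℕ → ℕ → ℝ) (x y : ℝ) (hx : |x| ≤ 2) (hyx : |y| ≤ |x|) :
    |∑ i ∈ Finset.Icc 3 d, ∑ j ∈ Finset.range (i + 1),
        b i j * x ^ (i - j) * (↑j * y ^ (j - 1))| ≤
      (↑d * 2 ^ d * |x|) * ∑ i ∈ Finset.Icc 3 d, ∑ j ∈ Finset.range (i + 1), |b i j| := by
  rw [Finset.mul_sum]
  refine (Finset.abs_sum_le_sum_abs _ _).trans (Finset.sum_le_sum fun i hi => ?_)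
  rw [Finset.mul_sum]
  refine (Finset.abs_sum_le_sum_abs _ _).trans (Finset.sum_le_sum fun j hj => ?_)
  simp only [Finset.mem_Icc] at hi
  simp only [Finset.mem_range] at hj
  rw [abs_mul, abs_mul, abs_mul, abs_pow]
  rcases Nat.eq_zero_or_pos j with rfl | hj1
  · simp; positivity
  · have hjd : (j : ℝ) ≤ d := by exact_mod_cast le_trans (by omega) hi.2
    have hcast : |(j : ℝ)| = (j : ℝ) := abs_of_nonneg (by positivity)
    rw [hcast, abs_pow]
    have hcore : |x| ^ (i - j) * |y| ^ (j - 1) ≤ 2 ^ d * |x| :=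
      core d x y hx hyx (i - j) (j - 1) (by omega) (by omega)
    have hb := abs_nonneg (b i j)
    calc |b i j| * |x| ^ (i - j) * ((j : ℝ) * |y| ^ (j - 1))
        = (j : ℝ) * (|x| ^ (i - j) * |y| ^ (j - 1)) * |b i j| := by ring
      _ ≤ (d : ℝ) * (2 ^ d * |x|) * |b i j| := by
          apply mul_le_mul_of_nonneg_right _ hb
          apply mul_le_mul hjd hcore (by positivity) (by positivity)
      _ = (↑d * 2 ^ d * |x|) * |b i j| := by ring

lemma err1_bound (d : ℕ) (b : ℕ → ℕ → ℝ) (x y : ℝ) (hx : |x| ≤ 2) (hyx : |y| ≤ |x|) :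
    |∑ i ∈ Finset.Icc 3 d, ∑ j ∈ Finset.range (i + 1),
        b i j * (↑(i - j) * x ^ (i - j - 1)) * y ^ j| ≤
      (↑d * 2 ^ d * |x|) * ∑ i ∈ Finset.Icc 3 d, ∑ j ∈ Finset.range (i + 1), |b i j| := by
  rw [Finset.mul_sum]
  refine (Finset.abs_sum_le_sum_abs _ _).trans (Finset.sum_le_sum fun i hi => ?_)
  rw [Finset.mul_sum]
  refine (Finset.abs_sum_le_sum_abs _ _).trans (Finset.sum_le_sum fun j hj => ?_)
  simp only [Finset.mem_Icc] at hi
  simp only [Finset.mem_range] at hj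
  rw [abs_mul, abs_mul, abs_mul, abs_pow, abs_pow]
  rcases Nat.lt_or_ge j i with hji | hji
  · have hjd : ((i - j : ℕ) : ℝ) ≤ d := by exact_mod_cast le_trans (by omega) hi.2
    have hcast : |((i - j : ℕ) : ℝ)| = ((i - j : ℕ) : ℝ) := abs_of_nonneg (by positivity)
    rw [hcast]
    have hcore : |x| ^ (i - j - 1) * |y| ^ j ≤ 2 ^ d * |x| :=
      core d x y hx hyx (i - j - 1) j (by omega) (by omega)
    have hb := abs_nonneg (b i j)
    calc |b i j| * (((i - j : ℕ) : ℝ) * |x| ^ (i - j - 1)) * |y| ^ j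
        = ((i - j : ℕ) : ℝ) * (|x| ^ (i - j - 1) * |y| ^ j) * |b i j| := by ring
      _ ≤ (d : ℝ) * (2 ^ d * |x|) * |b i j| := by
          apply mul_le_mul_of_nonneg_right _ hb
          apply mul_le_mul hjd hcore (by positivity) (by positivity)
      _ = (↑d * 2 ^ d * |x|) * |b i j| := by ring
  · have : i - j = 0 := by omega
    rw [this]
    simp
    positivity

/-- lower bounds on `∂₂h₀` at the normalized second base point `ζ̄`. -/
theorem statement9 (d : ℕ) (hd : 3 ≤ d) :
    ∃ ε₀' > (0 : ℝ), ∀ ε₀ : ℝ, 0 < ε₀ → ε₀ ≤ ε₀' →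
      ∃ K₀ : ℝ, ∀ KL : ℝ, K₀ ≤ KL →
        ∀ b : ℕ → ℕ → ℝ, CoeffSmall0 d ε₀ b →
          ∀ z : ℝ × ℝ, z ∈ Set.Icc (-2 : ℝ) 2 ×ˢ Set.Icc (-2 : ℝ) 2 →
            (2 * KL)⁻¹ < Real.sqrt (z.1 ^ 2 + z.2 ^ 2) →
            |z.2| ≤ |z.1| →
            1 / (3 * KL) ≤ |pd2 (hpoly0 d b) z.1 z.2| ∧
            1 / 2 * |pd1 (hpoly0 d b) z.1 z.2| ≤ |pd2 (hpoly0 d b) z.1 z.2| := by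
  refine ⟨1/100, by norm_num, fun ε₀ hε₀pos hε₀le => ⟨1, fun KL hKL b hb z hz hsqrt hyx => ?_⟩⟩
  obtain ⟨x, y⟩ := z
  simp only [Set.mem_prod, Set.mem_Icc] at hz
  simp only at hsqrt hyx ⊢
  have hx2 : |x| ≤ 2 := abs_le.mpr ⟨hz.1.1, hz.1.2⟩
  -- bound on the coefficient sum
  set S := ∑ i ∈ Finset.Icc 3 d, ∑ j ∈ Finset.range (i + 1), |b i j| with hS
  have hSnn : 0 ≤ S := Finset.sum_nonneg fun i _ => Finset.sum_nonneg fun j _ => abs_nonneg _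
  have hd2 : (d : ℝ) * 2 ^ d ≤ 100 ^ d := by
    have h1 : (d : ℝ) ≤ 2 ^ d := by exact_mod_cast Nat.lt_two_pow_self.le
    have h2 : (2 : ℝ) ^ d * 2 ^ d ≤ 100 ^ d := by
      rw [← mul_pow]
      exact pow_le_pow_left₀ (by norm_num) (by norm_num) d
    nlinarith [pow_nonneg (by norm_num : (0:ℝ) ≤ 2) d]
  have hSd : (d : ℝ) * 2 ^ d * S ≤ ε₀ := by
    unfold CoeffSmall0 at hb
    rw [← hS] at hb
    nlinarith [pow_nonneg (by norm_num : (0:ℝ) ≤ 100) d]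
  -- error bounds
  have hE2 := err2_bound d b x y hx2 hyx
  have hE1 := err1_bound d b x y hx2 hyx
  set E2 := ∑ i ∈ Finset.Icc 3 d, ∑ j ∈ Finset.range (i + 1),
      b i j * x ^ (i - j) * (↑j * y ^ (j - 1)) with hE2def
  set E1 := ∑ i ∈ Finset.Icc 3 d, ∑ j ∈ Finset.range (i + 1),
      b i j * (↑(i - j) * x ^ (i - j - 1)) * y ^ j with hE1def
  have habs_x : (0:ℝ) ≤ |x| := abs_nonneg x
  have hE2' : |E2| ≤ ε₀ * |x| := by
    calc |E2| ≤ (↑d * 2 ^ d * |x|) * S := hE2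
      _ = ((d : ℝ) * 2 ^ d * S) * |x| := by ring
      _ ≤ ε₀ * |x| := mul_le_mul_of_nonneg_right hSd habs_x
  have hE1' : |E1| ≤ ε₀ * |x| := by
    calc |E1| ≤ (↑d * 2 ^ d * |x|) * S := hE1
      _ = ((d : ℝ) * 2 ^ d * S) * |x| := by ring
      _ ≤ ε₀ * |x| := mul_le_mul_of_nonneg_right hSd habs_x
  have hε2 : ε₀ * |x| ≤ (1/100) * |x| := mul_le_mul_of_nonneg_right hε₀le habs_x
  -- lower bound on |x| from the sqrt hypothesis
  have hKL0 : (0:ℝ) < KL := lt_of_lt_of_le one_pos hKL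
  have hsqle : Real.sqrt (x ^ 2 + y ^ 2) ≤ Real.sqrt 2 * |x| := by
    have hy2 : y ^ 2 ≤ x ^ 2 := by
      rw [← sq_abs x, ← sq_abs y]
      exact pow_le_pow_left₀ (abs_nonneg y) hyx 2
    calc Real.sqrt (x ^ 2 + y ^ 2) ≤ Real.sqrt (2 * x ^ 2) :=
          Real.sqrt_le_sqrt (by nlinarith)
      _ = Real.sqrt 2 * |x| := by
          rw [Real.sqrt_mul (by norm_num), Real.sqrt_sq_eq_abs]
  have hs2 : Real.sqrt 2 ≤ 1.485 := by
    rw [show (1.485:ℝ) = Real.sqrt (1.485 ^ 2) by rw [Real.sqrt_sq (by norm_num)]]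
    exact Real.sqrt_le_sqrt (by norm_num)
  have hxlow : 1 < Real.sqrt 2 * |x| * (2 * KL) := by
    have h := lt_of_lt_of_le hsqrt hsqle
    rw [show (2 * KL)⁻¹ = 1 / (2 * KL) by ring, div_lt_iff₀ (by positivity)] at h
    linarith
  have hsnn : (0:ℝ) ≤ Real.sqrt 2 := Real.sqrt_nonneg 2
  have hkey : 1 / (3 * KL) ≤ (99/100) * |x| := by
    rw [div_le_iff₀ (by positivity)]
    nlinarith [mul_nonneg (mul_nonneg (sub_nonneg.mpr hs2) habs_x) hKL0.le,
      mul_nonneg habs_x hKL0.le]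
  -- the derivatives
  rw [pd2_eval, pd1_eval]
  have hlow2 : (99/100) * |x| ≤ |x + E2| := by
    have h := abs_sub_abs_le_abs_sub x (x + E2)
    have h2 : |x - (x + E2)| = |E2| := by rw [show x - (x + E2) = -E2 by ring, abs_neg]
    rw [h2] at h
    linarith
  constructor
  · linarith
  · have hup1 : |y + E1| ≤ (101/100) * |x| := by
      calc |y + E1| ≤ |y| + |E1| := abs_add_le y E1
        _ ≤ |x| + (1/100) * |x| := by linarith
        _ = (101/100) * |x| := by ring
    linarith
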